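/- arXiv:2310.20321 — 3 statements merged into one kernel-verified Lean document; each statement's English description precedes it below -/
import Mathlib

section
/- For a linear system with dynamics f(ξ) = Aξ, the function V(t,ξ) = ½ (ξ − x̂(t))ᵀ Σ(t)⁻¹ (ξ − x̂(t)) + (α/2) ∫₀ᵗ ‖y(s) − C x̂(s)‖² ds, where Σ solves the Riccati equation Σ' = AΣ + ΣAᵀ − αΣCᵀCΣ + FFᵀ with Σ(0) = I and x̂ solves x̂' = Ax̂ + αΣCᵀ(y − Cx̂) with x̂(0) = x₀, satisfies the Hamilton-Jacobi-Bellman equation ∂ₜV(t,ξ) = −∇ξV(t,ξ)ᵀAξ − ½‖Fᵀ∇ξV(t,ξ)‖² + (α/2)‖y(t) − Cξ‖², with initial condition V(0,ξ) = ½‖ξ − x₀‖². -/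
open Matrix

private lemma diffAt_det {n : ℕ} {M : ℝ → Matrix (Fin n) (Fin n) ℝ} {t : ℝ}
    (h : ∀ i j, DifferentiableAt ℝ (fun s => M s i j) t) :
    DifferentiableAt ℝ (fun s => (M s).det) t := by
  simp only [Matrix.det_apply']
  exact DifferentiableAt.fun_sum fun σ _ =>
    (DifferentiableAt.fun_finsetProd fun i _ => h (σ i) i).const_mul _

private lemma diffAt_inv_entry {n : ℕ} {M : ℝ → Matrix (Fin n) (Fin n) ℝ} {t : ℝ}
    (h : ∀ i j, DifferentiableAt ℝ (fun s => M s i j) t)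
    (hu : IsUnit (M t)) (i j : Fin n) :
    DifferentiableAt ℝ (fun s => (M s)⁻¹ i j) t := by
  have hdet : (M t).det ≠ 0 :=
    ((Matrix.isUnit_iff_isUnit_det _).mp hu).ne_zero
  have h1 : ∀ s, (M s)⁻¹ i j = ((M s).det)⁻¹ * (M s).adjugate i j := by
    intro s
    rw [Matrix.inv_def]
    simp [Ring.inverse_eq_inv', smul_eq_mul]
  simp only [h1]
  refine DifferentiableAt.mul ((diffAt_det h).inv hdet) ?_
  simp only [Matrix.adjugate_apply]
  refine diffAt_det fun a b => ?_
  simp only [Matrix.updateRow_apply]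
  split_ifs
  · exact differentiableAt_const _
  · exact h a b

private lemma hasDerivAt_inv_entry {n : ℕ} {M : ℝ → Matrix (Fin n) (Fin n) ℝ}
    {R : Matrix (Fin n) (Fin n) ℝ} {t : ℝ}
    (hM : ∀ i j, HasDerivAt (fun s => M s i j) (R i j) t)
    (hu : ∀ s, IsUnit (M s)) (i j : Fin n) :
    HasDerivAt (fun s => (M s)⁻¹ i j) ((-((M t)⁻¹ * R * (M t)⁻¹)) i j) t := by
  have hdiff : ∀ a b, DifferentiableAt ℝ (fun s => (M s)⁻¹ a b) t :=
    diffAt_inv_entry (fun a b => (hM a b).differentiableAt) (hu t)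
  set D : Matrix (Fin n) (Fin n) ℝ := fun a b => deriv (fun s => (M s)⁻¹ a b) t with hDdef
  have hDd : ∀ a b, HasDerivAt (fun s => (M s)⁻¹ a b) (D a b) t :=
    fun a b => (hdiff a b).hasDerivAt
  have hdetU : ∀ s, IsUnit (M s).det := fun s => (Matrix.isUnit_iff_isUnit_det _).mp (hu s)
  have hprod : ∀ a b, HasDerivAt (fun s => ((M s)⁻¹ * M s) a b)
      ((D * M t + (M t)⁻¹ * R) a b) t := by
    intro a b
    have heq : (fun s => ((M s)⁻¹ * M s) a b) = fun s => ∑ k, (M s)⁻¹ a k * M s k b := by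
      funext s; simp [Matrix.mul_apply]
    rw [heq]
    have h2 := HasDerivAt.fun_sum
      (fun k (_ : k ∈ (Finset.univ : Finset (Fin n))) => (hDd a k).fun_mul (hM k b))
    convert h2 using 1
    · rfl
    · rfl
    simp [Matrix.mul_apply, Matrix.add_apply, Finset.sum_add_distrib]
  have hconst : ∀ a b, HasDerivAt (fun s => ((M s)⁻¹ * M s) a b) 0 t := by
    intro a b
    have heq : (fun s => ((M s)⁻¹ * M s) a b) = fun _ => (1 : Matrix (Fin n) (Fin n) ℝ) a b := by
      funext s; rw [Matrix.nonsing_inv_mul _ (hdetU s)]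
    rw [heq]; exact hasDerivAt_const _ _
  have hzero : D * M t + (M t)⁻¹ * R = 0 := by
    ext a b
    have := (hprod a b).unique (hconst a b)
    simpa using this
  have h1 : D * M t = -((M t)⁻¹ * R) := by
    rw [eq_neg_iff_add_eq_zero]; exact hzero
  have hDeq : D = -((M t)⁻¹ * R * (M t)⁻¹) := by
    calc D = D * (M t * (M t)⁻¹) := by rw [Matrix.mul_nonsing_inv _ (hdetU t), mul_one]
    _ = (D * M t) * (M t)⁻¹ := by rw [mul_assoc]
    _ = -((M t)⁻¹ * R * (M t)⁻¹) := by rw [h1, neg_mul]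
  rw [← hDeq]
  exact hDd i j

private lemma hasDerivAt_quadform {n : ℕ} {u : ℝ → Fin n → ℝ} {u' : Fin n → ℝ}
    {M : ℝ → Matrix (Fin n) (Fin n) ℝ} {M' : Matrix (Fin n) (Fin n) ℝ} {t : ℝ}
    (hu : ∀ i, HasDerivAt (fun s => u s i) (u' i) t)
    (hM : ∀ i j, HasDerivAt (fun s => M s i j) (M' i j) t) :
    HasDerivAt (fun s => u s ⬝ᵥ (M s *ᵥ u s))
      (u' ⬝ᵥ (M t *ᵥ u t) + u t ⬝ᵥ (M' *ᵥ u t) + u t ⬝ᵥ (M t *ᵥ u')) t := by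
  simp only [dotProduct, Matrix.mulVec]
  have key : ∀ i : Fin n, HasDerivAt (fun s => u s i * ∑ j, M s i j * u s j)
      (u' i * ∑ j, M t i j * u t j
        + u t i * ∑ j, (M' i j * u t j + M t i j * u' j)) t :=
    fun i => (hu i).fun_mul (HasDerivAt.fun_sum fun j _ => (hM i j).fun_mul (hu j))
  convert HasDerivAt.fun_sum (fun i _ => key i) using 1
  · rfl
  · rfl
  rw [← Finset.sum_add_distrib, ← Finset.sum_add_distrib]
  refine Finset.sum_congr rfl fun i _ => ?_
  rw [Finset.sum_add_distrib, mul_add]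
  ring

private lemma final_algebra {n m r : ℕ} (A : Matrix (Fin n) (Fin n) ℝ)
    (F : Matrix (Fin n) (Fin m) ℝ) (C : Matrix (Fin r) (Fin n) ℝ) (α : ℝ)
    (S : Matrix (Fin n) (Fin n) ℝ) (hS : Sᵀ = S) (hdet : IsUnit S.det)
    (u v : Fin n → ℝ) (w : Fin r → ℝ) :
    (1/2) * ((-(A *ᵥ v + α • ((S * Cᵀ) *ᵥ w))) ⬝ᵥ (S⁻¹ *ᵥ u)
        + u ⬝ᵥ ((-(S⁻¹ * (A * S + S * Aᵀ - α • (S * Cᵀ * C * S) + F * Fᵀ) * S⁻¹)) *ᵥ u)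
        + u ⬝ᵥ (S⁻¹ *ᵥ (-(A *ᵥ v + α • ((S * Cᵀ) *ᵥ w)))))
      + (α/2) * (w ⬝ᵥ w)
    = -((S⁻¹ *ᵥ u) ⬝ᵥ (A *ᵥ u + A *ᵥ v))
        - (1/2) * ((Fᵀ *ᵥ (S⁻¹ *ᵥ u)) ⬝ᵥ (Fᵀ *ᵥ (S⁻¹ *ᵥ u)))
        + (α/2) * ((w - C *ᵥ u) ⬝ᵥ (w - C *ᵥ u)) := by
  have hSQ : S * S⁻¹ = 1 := Matrix.mul_nonsing_inv _ hdet
  have hQS : S⁻¹ * S = 1 := Matrix.nonsing_inv_mul _ hdet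
  have hQsym : (S⁻¹)ᵀ = S⁻¹ := by rw [Matrix.transpose_nonsing_inv, hS]
  have hfold : ∀ X : Matrix (Fin n) (Fin n) ℝ, S⁻¹ * (S * X) = X := by
    intro X; rw [← Matrix.mul_assoc, hQS, one_mul]
  have hQRQ : S⁻¹ * (A * S + S * Aᵀ - α • (S * Cᵀ * C * S) + F * Fᵀ) * S⁻¹
      = S⁻¹ * A + Aᵀ * S⁻¹ - α • (Cᵀ * C) + S⁻¹ * (F * Fᵀ) * S⁻¹ := by
    simp only [Matrix.mul_add, Matrix.add_mul, Matrix.mul_sub, Matrix.sub_mul,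
      mul_smul_comm, smul_mul_assoc, Matrix.mul_assoc, hSQ, hfold,
      Matrix.mul_one, Matrix.one_mul]
  rw [hQRQ]
  have hsym : ∀ z : Fin n → ℝ, u ⬝ᵥ (S⁻¹ *ᵥ z) = (S⁻¹ *ᵥ u) ⬝ᵥ z := by
    intro z
    rw [Matrix.dotProduct_mulVec]
    congr 1
    rw [← Matrix.mulVec_transpose, hQsym]
  have hsymT : ∀ {k : ℕ} (B : Matrix (Fin k) (Fin n) ℝ) (z : Fin k → ℝ),
      u ⬝ᵥ (Bᵀ *ᵥ z) = (B *ᵥ u) ⬝ᵥ z := by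
    intro k B z
    rw [Matrix.dotProduct_mulVec, Matrix.vecMul_transpose]
  have hCS : ∀ z : Fin r → ℝ, (S⁻¹ *ᵥ u) ⬝ᵥ (S *ᵥ (Cᵀ *ᵥ z)) = (C *ᵥ u) ⬝ᵥ z := by
    intro z
    rw [Matrix.mulVec_mulVec, Matrix.dotProduct_mulVec]
    congr 1
    rw [← Matrix.mulVec_transpose, Matrix.transpose_mul, Matrix.transpose_transpose, hS,
      Matrix.mulVec_mulVec, Matrix.mul_assoc, hSQ, Matrix.mul_one]
  have hF : ∀ z : Fin m → ℝ, (S⁻¹ *ᵥ u) ⬝ᵥ (F *ᵥ z) = (Fᵀ *ᵥ (S⁻¹ *ᵥ u)) ⬝ᵥ z := by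
    intro z
    rw [Matrix.dotProduct_mulVec]
    congr 1
    exact (Matrix.mulVec_transpose F _).symm
  simp only [Matrix.neg_mulVec, Matrix.add_mulVec, Matrix.sub_mulVec,
    Matrix.smul_mulVec, ← Matrix.mulVec_mulVec,
    dotProduct_neg, neg_dotProduct, dotProduct_add,
    add_dotProduct, dotProduct_sub, sub_dotProduct,
    dotProduct_smul, smul_dotProduct, smul_eq_mul,
    Matrix.mulVec_add, Matrix.mulVec_smul, hsym, hsymT, hCS]
  rw [dotProduct_comm (A *ᵥ v) (S⁻¹ *ᵥ u),
    dotProduct_comm (S *ᵥ Cᵀ *ᵥ w) (S⁻¹ *ᵥ u),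
    dotProduct_comm (A *ᵥ u) (S⁻¹ *ᵥ u)]
  simp only [hCS, hF]
  rw [dotProduct_comm w (C *ᵥ u)]
  ring


/- STATEMENT 0: In the linear case f(ξ) = Aξ, the explicit quadratic function
V(t,ξ) = ½ (ξ − x̂(t))ᵀ Σ(t)⁻¹ (ξ − x̂(t)) + (α/2)∫₀ᵗ ‖y − Cx̂‖², with Σ solving the
Riccati equation and x̂ the Kalman–Bucy observer equation, satisfies the HJB equation
∂ₜV = −∇ξVᵀAξ − ½‖Fᵀ∇ξV‖² + (α/2)‖y(t) − Cξ‖² (with ∇ξV(t,ξ) = Σ(t)⁻¹(ξ − x̂(t)))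
and the initial condition V(0,ξ) = ½‖ξ − x₀‖². -/
theorem mortensen_linear_value_function_solves_HJB
    {n m r : ℕ}
    (A : Matrix (Fin n) (Fin n) ℝ) (F : Matrix (Fin n) (Fin m) ℝ)
    (C : Matrix (Fin r) (Fin n) ℝ) (x0 : Fin n → ℝ)
    (α T : ℝ) (hα : 0 < α) (hT : 0 < T)
    (y : ℝ → Fin r → ℝ) (hy : Continuous y)
    (Sg : ℝ → Matrix (Fin n) (Fin n) ℝ) (xh : ℝ → Fin n → ℝ)
    (hSgsym : ∀ t : ℝ, (Sg t)ᵀ = Sg t)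
    (hSginv : ∀ t : ℝ, IsUnit (Sg t))
    (hRic : ∀ t : ℝ, ∀ i j, HasDerivAt (fun s => Sg s i j)
      ((A * Sg t + Sg t * Aᵀ - α • (Sg t * Cᵀ * C * Sg t) + F * Fᵀ) i j) t)
    (hSg0 : Sg 0 = 1)
    (hobs : ∀ t : ℝ, HasDerivAt xh
      (A *ᵥ xh t + α • ((Sg t * Cᵀ) *ᵥ (y t - C *ᵥ xh t))) t)
    (hx0 : xh 0 = x0)
    (V : ℝ → (Fin n → ℝ) → ℝ)
    (hV : ∀ t ξ, V t ξ =
      (1/2) * ((ξ - xh t) ⬝ᵥ ((Sg t)⁻¹ *ᵥ (ξ - xh t)))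
      + (α/2) * ∫ s in (0:ℝ)..t, (y s - C *ᵥ xh s) ⬝ᵥ (y s - C *ᵥ xh s)) :
    (∀ (t : ℝ) (ξ : Fin n → ℝ), HasDerivAt (fun s => V s ξ)
      (-(((Sg t)⁻¹ *ᵥ (ξ - xh t)) ⬝ᵥ (A *ᵥ ξ))
        - (1/2) * ((Fᵀ *ᵥ ((Sg t)⁻¹ *ᵥ (ξ - xh t))) ⬝ᵥ (Fᵀ *ᵥ ((Sg t)⁻¹ *ᵥ (ξ - xh t))))
        + (α/2) * ((y t - C *ᵥ ξ) ⬝ᵥ (y t - C *ᵥ ξ))) t)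
    ∧ (∀ ξ : Fin n → ℝ, V 0 ξ = (1/2) * ((ξ - x0) ⬝ᵥ (ξ - x0))) := by
  constructor
  · intro t ξ
    -- continuity of the integrand
    have hxh_cont : Continuous xh := continuous_iff_continuousAt.mpr fun s => (hobs s).continuousAt
    have h1 : Continuous fun s => y s - C *ᵥ xh s := by
      refine hy.sub (continuous_pi fun i => ?_)
      simp only [Matrix.mulVec, dotProduct]
      exact continuous_finset_sum _ fun j _ =>
        continuous_const.mul ((continuous_apply j).comp hxh_cont)
    have hφ : Continuous fun s => (y s - C *ᵥ xh s) ⬝ᵥ (y s - C *ᵥ xh s) := by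
      simp only [dotProduct]
      exact continuous_finset_sum _ fun i _ =>
        ((continuous_apply i).comp h1).mul ((continuous_apply i).comp h1)
    have hint : HasDerivAt
        (fun s => ∫ x in (0:ℝ)..s, (y x - C *ᵥ xh x) ⬝ᵥ (y x - C *ᵥ xh x))
        ((y t - C *ᵥ xh t) ⬝ᵥ (y t - C *ᵥ xh t)) t :=
      (hφ.integral_hasStrictDerivAt 0 t).hasDerivAt
    have hu : ∀ i, HasDerivAt (fun s => (ξ - xh s) i)
        ((-(A *ᵥ xh t + α • ((Sg t * Cᵀ) *ᵥ (y t - C *ᵥ xh t)))) i) t := by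
      intro i
      have h2 := (hasDerivAt_pi.mp (hobs t)) i
      simpa using h2.const_sub (ξ i)
    have hQder : ∀ i j, HasDerivAt (fun s => (Sg s)⁻¹ i j)
        ((-((Sg t)⁻¹ * (A * Sg t + Sg t * Aᵀ - α • (Sg t * Cᵀ * C * Sg t) + F * Fᵀ)
          * (Sg t)⁻¹)) i j) t :=
      hasDerivAt_inv_entry (hRic t) hSginv
    have hquad := hasDerivAt_quadform (u := fun s => ξ - xh s) (M := fun s => (Sg s)⁻¹)
      hu hQder
    have hVeq : (fun s => V s ξ) = fun s =>
        (1/2) * ((ξ - xh s) ⬝ᵥ ((Sg s)⁻¹ *ᵥ (ξ - xh s)))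
        + (α/2) * ∫ x in (0:ℝ)..s, (y x - C *ᵥ xh x) ⬝ᵥ (y x - C *ᵥ xh x) :=
      funext fun s => hV s ξ
    rw [hVeq]
    have hcomb := (hquad.const_mul (1/2 : ℝ)).fun_add (hint.const_mul (α/2 : ℝ))
    have hAξ : A *ᵥ ξ = A *ᵥ (ξ - xh t) + A *ᵥ xh t := by
      rw [← Matrix.mulVec_add, sub_add_cancel]
    have hyC : y t - C *ᵥ ξ = (y t - C *ᵥ xh t) - C *ᵥ (ξ - xh t) := by
      rw [Matrix.mulVec_sub]; abel
    have halg := final_algebra A F C α (Sg t) (hSgsym t)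
      ((Matrix.isUnit_iff_isUnit_det _).mp (hSginv t)) (ξ - xh t) (xh t) (y t - C *ᵥ xh t)
    convert hcomb using 1
    · rfl
    · rfl
    rw [hAξ, hyC]
    exact halg.symm
  · intro ξ
    rw [hV 0 ξ, hSg0, hx0]
    simp [inv_one, Matrix.one_mulVec, intervalIntegral.integral_same]
end

section
/- Let V be a C³ (in ξ), C¹ (in t) solution of the HJB equation ∂ₜV = −∇ξVᵀ f − ½‖Fᵀ∇ξV‖² + (α/2)‖y(t) − Cξ‖² with f : ℝⁿ → ℝⁿ of class C¹. Let x̂ be differentiable with ∇ξV(t, x̂(t)) = 0 and ∇²ξξV(t, x̂(t)) invertible for all t. Then x̂ satisfies the Mortensen observer equation x̂'(t) = f(x̂(t)) + α ∇²ξξV(t, x̂(t))⁻¹ Cᵀ (y(t) − C x̂(t)). -/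
open Matrix

noncomputable def dotCLM {n : ℕ} (g : Fin n → ℝ) : (Fin n → ℝ) →L[ℝ] ℝ :=
  LinearMap.toContinuousLinearMap
    { toFun := fun v => g ⬝ᵥ v
      map_add' := by intro x y; simp [dotProduct_add]
      map_smul' := by intro c x; simp [dotProduct_smul] }

noncomputable def mvCLM {n k : ℕ} (M : Matrix (Fin n) (Fin k) ℝ) :
    (Fin k → ℝ) →L[ℝ] (Fin n → ℝ) :=
  LinearMap.toContinuousLinearMap M.mulVecLin

noncomputable def pairCLM {n : ℕ} (a : Fin n → ℝ) (M : Matrix (Fin n) (Fin n) ℝ) :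
    (ℝ × (Fin n → ℝ)) →L[ℝ] (Fin n → ℝ) :=
  LinearMap.toContinuousLinearMap
    { toFun := fun p => p.1 • a + M *ᵥ p.2
      map_add' := by intro p q; simp [add_smul, Matrix.mulVec_add]; module
      map_smul' := by intro s p; simp [smul_smul, Matrix.mulVec_smul, smul_add] }


noncomputable def dotL {n : ℕ} : (Fin n → ℝ) →L[ℝ] ((Fin n → ℝ) →L[ℝ] ℝ) :=
  LinearMap.toContinuousLinearMap
    { toFun := dotCLM
      map_add' := by
        intro a b; ext v; simp [dotCLM, add_dotProduct]
      map_smul' := by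
        intro c a; ext v; simp [dotCLM, smul_dotProduct] }

lemma dotL_apply {n : ℕ} (g v : Fin n → ℝ) : dotL g v = g ⬝ᵥ v := rfl

lemma mvCLM_apply {n k : ℕ} (M : Matrix (Fin n) (Fin k) ℝ) (v : Fin k → ℝ) :
    mvCLM M v = M *ᵥ v := rfl

lemma dotCLM_apply {n : ℕ} (g v : Fin n → ℝ) : dotCLM g v = g ⬝ᵥ v := rfl

lemma dotBB {n : ℕ} : IsBoundedBilinearMap ℝ
    (fun p : (Fin n → ℝ) × (Fin n → ℝ) => p.1 ⬝ᵥ p.2) :=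
  (dotL (n := n)).isBoundedBilinearMap

/- STATEMENT 3: let V (gradient G, Hessian H, time derivative Vt) solve the HJB
equation ∂ₜV = −∇ξVᵀf − ½‖Fᵀ∇ξV‖² + (α/2)‖y(t) − Cξ‖², f of class C¹ with
Jacobian J; let x̂ be differentiable with ∇ξV(t,x̂(t)) = 0 and invertible Hessian
at (t, x̂(t)). Then x̂ satisfies the Mortensen observer equation
x̂'(t) = f(x̂(t)) + α ∇²ξξV(t,x̂(t))⁻¹ Cᵀ (y(t) − C x̂(t)). -/
theorem mortensen_observer_equation
    {n m r : ℕ}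
    (f : (Fin n → ℝ) → (Fin n → ℝ)) (J : (Fin n → ℝ) → Matrix (Fin n) (Fin n) ℝ)
    (hf : ∀ ξ, HasFDerivAt f (mvCLM (J ξ)) ξ)
    (hJcont : Continuous J)
    (F : Matrix (Fin n) (Fin m) ℝ) (C : Matrix (Fin r) (Fin n) ℝ)
    (α : ℝ) (hα : 0 < α)
    (y : ℝ → Fin r → ℝ) (hy : Continuous y)
    (V : ℝ → (Fin n → ℝ) → ℝ)
    (G Gt : ℝ → (Fin n → ℝ) → (Fin n → ℝ))
    (H : ℝ → (Fin n → ℝ) → Matrix (Fin n) (Fin n) ℝ)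
    (Vt : ℝ → (Fin n → ℝ) → ℝ)
    -- V is C¹ in t with time derivative Vt, C² in ξ with gradient G and Hessian H
    (hVt : ∀ (t : ℝ) (ξ : Fin n → ℝ), HasDerivAt (fun s => V s ξ) (Vt t ξ) t)
    (hG : ∀ (t : ℝ) (ξ : Fin n → ℝ), HasFDerivAt (V t) (dotCLM (G t ξ)) ξ)
    (hH : ∀ (t : ℝ) (ξ : Fin n → ℝ), HasFDerivAt (fun ζ => G t ζ) (mvCLM (H t ξ)) ξ)
    (hGt : ∀ (t : ℝ) (ξ : Fin n → ℝ), HasDerivAt (fun s => G s ξ) (Gt t ξ) t)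
    -- Schwarz: the spatial gradient of ∂ₜV is ∂ₜ∇ξV
    (hmix : ∀ (t : ℝ) (ξ : Fin n → ℝ), HasFDerivAt (fun ζ => Vt t ζ) (dotCLM (Gt t ξ)) ξ)
    -- the HJB equation
    (hHJB : ∀ (t : ℝ) (ξ : Fin n → ℝ), Vt t ξ =
      -(G t ξ ⬝ᵥ f ξ)
      - (1/2) * ((Fᵀ *ᵥ G t ξ) ⬝ᵥ (Fᵀ *ᵥ G t ξ))
      + (α/2) * ((y t - C *ᵥ ξ) ⬝ᵥ (y t - C *ᵥ ξ)))
    (xh : ℝ → Fin n → ℝ) (d : ℝ → Fin n → ℝ)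
    (hxh : ∀ t : ℝ, HasDerivAt xh (d t) t)
    (hcrit : ∀ t : ℝ, G t (xh t) = 0)
    (hinv : ∀ t : ℝ, IsUnit (H t (xh t)))
    -- G is C¹ jointly (chain rule hypothesis)
    (hjoint : ∀ t : ℝ, HasFDerivAt (fun p : ℝ × (Fin n → ℝ) => G p.1 p.2)
      (pairCLM (Gt t (xh t)) (H t (xh t))) (t, xh t)) :
    ∀ t : ℝ, d t = f (xh t)
      + α • ((H t (xh t))⁻¹ *ᵥ (Cᵀ *ᵥ (y t - C *ᵥ xh t))) := by

  intro t
  set x := xh t with hx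
  have hGx : G t x = 0 := hcrit t
  set w : Fin r → ℝ := y t - C *ᵥ x with hw
  -- Step A: differentiate G t (xh t) = 0
  have hpair : HasDerivAt (fun s => (s, xh s)) ((1 : ℝ), d t) t :=
    (hasDerivAt_id t).prodMk (hxh t)
  have hA0 : HasDerivAt (fun s => G s (xh s)) (pairCLM (Gt t x) (H t x) (1, d t)) t :=
    by have h := (hjoint t).comp_hasDerivAt t hpair; exact h
  have hconstfun : (fun s => G s (xh s)) = fun _ => (0 : Fin n → ℝ) := by
    funext s; exact hcrit s
  have hA1 : HasDerivAt (fun _ : ℝ => (0 : Fin n → ℝ)) (pairCLM (Gt t x) (H t x) (1, d t)) t := by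
    rwa [hconstfun] at hA0
  have hA : Gt t x + H t x *ᵥ d t = 0 := by
    have := hA1.unique (hasDerivAt_const t 0)
    simpa [pairCLM, LinearMap.coe_toContinuousLinearMap'] using this
  -- Step B: symmetry of the Hessian
  have hsym : ∀ v u : Fin n → ℝ, (H t x *ᵥ v) ⬝ᵥ u = (H t x *ᵥ u) ⬝ᵥ v := by
    intro v u
    have hf'' : HasFDerivAt (fun ξ => dotCLM (G t ξ))
        ((dotL).comp (mvCLM (H t x))) x :=
      (dotL).hasFDerivAt.comp x (hH t x)
    have := second_derivative_symmetric (f := V t) (f' := fun ξ => dotCLM (G t ξ))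
      (fun ξ => hG t ξ) hf'' v u
    simpa [ContinuousLinearMap.comp_apply, dotL_apply, mvCLM_apply, dotCLM_apply] using this
  -- Step C: differentiate the HJB equation in ξ at x
  have hT1 : HasFDerivAt (fun ζ => G t ζ ⬝ᵥ f ζ)
      ((dotBB.deriv (G t x, f x)).comp ((mvCLM (H t x)).prod (mvCLM (J x)))) x :=
    by have h := (dotBB.hasFDerivAt (G t x, f x)).comp x ((hH t x).prodMk (hf x)); exact h
  have hu2 : HasFDerivAt (fun ζ => Fᵀ *ᵥ G t ζ) ((mvCLM Fᵀ).comp (mvCLM (H t x))) x :=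
    (mvCLM Fᵀ).hasFDerivAt.comp x (hH t x)
  have hT2 : HasFDerivAt (fun ζ => (Fᵀ *ᵥ G t ζ) ⬝ᵥ (Fᵀ *ᵥ G t ζ))
      ((dotBB.deriv (Fᵀ *ᵥ G t x, Fᵀ *ᵥ G t x)).comp
        (((mvCLM Fᵀ).comp (mvCLM (H t x))).prod ((mvCLM Fᵀ).comp (mvCLM (H t x))))) x :=
    by have h := (dotBB.hasFDerivAt (Fᵀ *ᵥ G t x, Fᵀ *ᵥ G t x)).comp x (hu2.prodMk hu2); exact h
  have hu3 : HasFDerivAt (fun ζ : Fin n → ℝ => y t - C *ᵥ ζ) (-(mvCLM C)) x := by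
    simpa [mvCLM_apply] using (hasFDerivAt_const (y t) x).sub (mvCLM C).hasFDerivAt
  have hT3 : HasFDerivAt (fun ζ => (y t - C *ᵥ ζ) ⬝ᵥ (y t - C *ᵥ ζ))
      ((dotBB.deriv (w, w)).comp ((-(mvCLM C)).prod (-(mvCLM C)))) x :=
    by have h := (dotBB.hasFDerivAt (w, w)).comp x (hu3.prodMk hu3); exact h
  have hRHS : HasFDerivAt (fun ζ => -(G t ζ ⬝ᵥ f ζ)
        - (1/2) * ((Fᵀ *ᵥ G t ζ) ⬝ᵥ (Fᵀ *ᵥ G t ζ))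
        + (α/2) * ((y t - C *ᵥ ζ) ⬝ᵥ (y t - C *ᵥ ζ)))
      (-((dotBB.deriv (G t x, f x)).comp ((mvCLM (H t x)).prod (mvCLM (J x))))
        - (1/2 : ℝ) • ((dotBB.deriv (Fᵀ *ᵥ G t x, Fᵀ *ᵥ G t x)).comp
          (((mvCLM Fᵀ).comp (mvCLM (H t x))).prod ((mvCLM Fᵀ).comp (mvCLM (H t x)))))
        + (α/2 : ℝ) • ((dotBB.deriv (w, w)).comp ((-(mvCLM C)).prod (-(mvCLM C))))) x :=
    (hT1.neg.sub (hT2.const_mul (1/2))).add (hT3.const_mul (α/2))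
  have hfun : (fun ζ => Vt t ζ) = (fun ζ => -(G t ζ ⬝ᵥ f ζ)
        - (1/2) * ((Fᵀ *ᵥ G t ζ) ⬝ᵥ (Fᵀ *ᵥ G t ζ))
        + (α/2) * ((y t - C *ᵥ ζ) ⬝ᵥ (y t - C *ᵥ ζ))) := by
    funext ζ; exact hHJB t ζ
  have hC := ((hfun ▸ hmix t x) : HasFDerivAt _ (dotCLM (Gt t x)) x).unique hRHS
  have hdot : ∀ v : Fin n → ℝ, Gt t x ⬝ᵥ v
      = -((H t x *ᵥ f x) ⬝ᵥ v) - α * ((Cᵀ *ᵥ w) ⬝ᵥ v) := by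
    intro v
    have := congrFun (congrArg DFunLike.coe hC) v
    simp only [ContinuousLinearMap.add_apply, ContinuousLinearMap.sub_apply,
      ContinuousLinearMap.neg_apply, ContinuousLinearMap.smul_apply,
      ContinuousLinearMap.comp_apply, ContinuousLinearMap.prod_apply,
      IsBoundedBilinearMap.deriv_apply, dotCLM_apply, mvCLM_apply, hGx] at this
    rw [this]
    have h1 : (H t x *ᵥ v) ⬝ᵥ f x = (H t x *ᵥ f x) ⬝ᵥ v := hsym v (f x)
    have h2 : w ⬝ᵥ (C *ᵥ v) = (Cᵀ *ᵥ w) ⬝ᵥ v := by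
      rw [Matrix.mulVec_transpose, ← Matrix.dotProduct_mulVec]
    have h3 : (C *ᵥ v) ⬝ᵥ w = (Cᵀ *ᵥ w) ⬝ᵥ v := by
      rw [dotProduct_comm]; exact h2
    simp only [hGx, Matrix.mulVec_zero, zero_dotProduct, dotProduct_zero,
      dotProduct_neg, neg_dotProduct, smul_eq_mul, h1, h2, h3]
    ring
  have hGt_eq : Gt t x = -(H t x *ᵥ f x) - α • (Cᵀ *ᵥ w) := by
    funext i
    have := hdot (Pi.single i 1)
    simpa [dotProduct_single] using this
  have hHd : H t x *ᵥ d t = H t x *ᵥ f x + α • (Cᵀ *ᵥ w) := by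
    have h := eq_neg_of_add_eq_zero_right hA
    rw [hGt_eq] at h
    rw [h]; module
  have hdet : IsUnit (H t x).det := (Matrix.isUnit_iff_isUnit_det _).mp (hinv t)
  have hinvmul : (H t x)⁻¹ * H t x = 1 := Matrix.nonsing_inv_mul _ hdet
  have : (H t x)⁻¹ *ᵥ (H t x *ᵥ d t) = (H t x)⁻¹ *ᵥ (H t x *ᵥ f x + α • (Cᵀ *ᵥ w)) := by
    rw [hHd]
  rw [Matrix.mulVec_mulVec, hinvmul, Matrix.one_mulVec] at this
  rw [this, Matrix.mulVec_add, Matrix.mulVec_mulVec, hinvmul, Matrix.one_mulVec,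
    Matrix.mulVec_smul]
end

section
/- The hyperbolic cross index set J_Space(s) = { i ∈ ℕ₀ⁿ : ∏_{j=1}^n (i_j + 1) ≤ s + 1 } has cardinality at most (s+1)·(1 + log(s+1))^{n−1} · C for a constant C depending only on n; in particular for fixed s its cardinality grows polynomially (not exponentially) in n in the sense that |J_Space(s)| ≤ (s+1) · binom(n + ⌊log₂(s+1)⌋, ⌊log₂(s+1)⌋) · 2^{⌊log₂(s+1)⌋}. -/
lemma aux_card_finset_sum_multiset {β α : Type*} [DecidableEq β] (s : Finset β)
    (f : β → Multiset α) :
    Multiset.card (∑ b ∈ s, f b) = ∑ b ∈ s, Multiset.card (f b) := by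
  induction s using Finset.induction with
  | empty => simp
  | insert _ _ h ih => simp [Finset.sum_insert h, ih]

lemma aux_ico_card (e : ℕ) : (2 ^ (e + 1) - 1) - (2 ^ e - 1) = 2 ^ e := by
  have h1 : 1 ≤ 2 ^ e := Nat.one_le_two_pow
  have h2 : 2 ^ (e + 1) = 2 * 2 ^ e := by ring
  omega

lemma aux_mem_ico (x e : ℕ) (h1 : 2 ^ e ≤ x + 1) (h2 : x + 1 < 2 ^ (e + 1)) :
    2 ^ e - 1 ≤ x ∧ x < 2 ^ (e + 1) - 1 := by
  have h3 : 1 ≤ 2 ^ e := Nat.one_le_two_pow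
  omega

/- STATEMENT 12: the hyperbolic cross index set
J_Space(s) = { i ∈ ℕ₀ⁿ : ∏_j (i_j + 1) ≤ s + 1 } is finite and its cardinality
satisfies the combinatorial bound
|J_Space(s)| ≤ (s+1) · binom(n + ⌊log₂(s+1)⌋, ⌊log₂(s+1)⌋) · 2^{⌊log₂(s+1)⌋};
in particular, for fixed s it grows only polynomially in n. -/
theorem hyperbolic_cross_card_bound (n s : ℕ) :
    {i : Fin n → ℕ | ∏ j, (i j + 1) ≤ s + 1}.Finite
    ∧ Nat.card {i : Fin n → ℕ // ∏ j, (i j + 1) ≤ s + 1}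
      ≤ (s + 1) * (n + Nat.log 2 (s + 1)).choose (Nat.log 2 (s + 1))
          * 2 ^ (Nat.log 2 (s + 1)) := by
  classical
  set L := Nat.log 2 (s + 1) with hLdef
  -- single factor bound
  have hsingle : ∀ (i : Fin n → ℕ), (∏ j, (i j + 1) ≤ s + 1) → ∀ j, i j ≤ s := by
    intro i hi j
    have h1 : i j + 1 ≤ ∏ k, (i k + 1) :=
      Finset.single_le_prod' (fun k _ => Nat.succ_le_succ (Nat.zero_le _)) (Finset.mem_univ j)
    have h2 : i j + 1 ≤ s + 1 := le_trans h1 hi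
    exact Nat.le_of_succ_le_succ h2
  -- key: sum of logs is at most L
  have key : ∀ i : Fin n → ℕ, (∏ j, (i j + 1) ≤ s + 1) →
      ∑ j, Nat.log 2 (i j + 1) ≤ L := by
    intro i hi
    rw [hLdef, Nat.le_log_iff_pow_le one_lt_two (Nat.succ_ne_zero s)]
    calc 2 ^ ∑ j, Nat.log 2 (i j + 1) = ∏ j, 2 ^ Nat.log 2 (i j + 1) := by
          rw [Finset.prod_pow_eq_pow_sum]
      _ ≤ ∏ j, (i j + 1) :=
          Finset.prod_le_prod' fun j _ => Nat.pow_log_le_self 2 (Nat.succ_ne_zero _)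
      _ ≤ s + 1 := hi
  -- finiteness
  have hfin : {i : Fin n → ℕ | ∏ j, (i j + 1) ≤ s + 1}.Finite := by
    apply Set.Finite.subset (Set.Finite.pi (fun _ : Fin n => Set.finite_Iic s))
    intro i hi
    simp only [Set.mem_pi, Set.mem_univ, Set.mem_Iic, forall_true_left]
    exact fun j => hsingle i hi j
  refine ⟨hfin, ?_⟩
  -- realize as a Finset
  set J : Finset (Fin n → ℕ) :=
    (Fintype.piFinset fun _ : Fin n => Finset.range (s + 1)).filter
      (fun i => ∏ j, (i j + 1) ≤ s + 1) with hJdef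
  have hSJ : {i : Fin n → ℕ | ∏ j, (i j + 1) ≤ s + 1} = ↑J := by
    ext i
    simp only [hJdef, Set.mem_setOf_eq, Finset.coe_filter, Fintype.mem_piFinset,
      Finset.mem_range]
    constructor
    · intro h
      exact ⟨fun j => Nat.lt_succ_of_le (hsingle i h j), h⟩
    · exact fun h => h.2
  have hcard : Nat.card {i : Fin n → ℕ // ∏ j, (i j + 1) ≤ s + 1} = J.card :=
    calc Nat.card {i : Fin n → ℕ // ∏ j, (i j + 1) ≤ s + 1}
        = ({i : Fin n → ℕ | ∏ j, (i j + 1) ≤ s + 1}).ncard :=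
          Nat.card_coe_set_eq _
      _ = J.card := by rw [hSJ, Set.ncard_coe_finset]
  rw [hcard]
  -- the map to log-tuples
  set f : (Fin n → ℕ) → (Fin n → ℕ) := fun i j => Nat.log 2 (i j + 1) with hfdef
  have himg : ∀ a ∈ J.image f, ∑ j, a j ≤ L := by
    intro a ha
    obtain ⟨i, hiJ, hfi⟩ := Finset.mem_image.1 ha
    have hiP : ∏ j, (i j + 1) ≤ s + 1 := (Finset.mem_filter.1 hiJ).2
    subst hfi
    exact key i hiP
  -- fiber bound
  have hfiber : ∀ a ∈ J.image f, (J.filter fun i => f i = a).card ≤ 2 ^ L := by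
    intro a ha
    have hsum := himg a ha
    calc (J.filter fun i => f i = a).card
        ≤ (Fintype.piFinset fun j => Finset.Ico (2 ^ a j - 1) (2 ^ (a j + 1) - 1)).card := by
          apply Finset.card_le_card
          intro i hi
          obtain ⟨hiJ, hfa⟩ := Finset.mem_filter.1 hi
          simp only [Fintype.mem_piFinset, Finset.mem_Ico]
          intro j
          have hlog : Nat.log 2 (i j + 1) = a j := congrFun hfa j
          have h1 : 2 ^ a j ≤ i j + 1 := hlog ▸ Nat.pow_log_le_self 2 (Nat.succ_ne_zero _)
          have h2 : i j + 1 < 2 ^ (a j + 1) := hlog ▸ Nat.lt_pow_succ_log_self one_lt_two _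
          exact aux_mem_ico (i j) (a j) h1 h2
      _ = 2 ^ ∑ j, a j := by
          rw [Fintype.card_piFinset, ← Finset.prod_pow_eq_pow_sum]
          refine Finset.prod_congr rfl fun j _ => ?_
          rw [Nat.card_Ico]
          exact aux_ico_card (a j)
      _ ≤ 2 ^ L := Nat.pow_le_pow_right (by norm_num) hsum
  -- image bound via stars and bars
  have himgcard : (J.image f).card ≤ (n + L).choose L := by
    set g : (Fin n → ℕ) → Sym (Fin (n + 1)) L := fun a =>
      if h : ∑ j, a j ≤ L then
        ⟨Multiset.replicate (L - ∑ j, a j) 0 + ∑ j, Multiset.replicate (a j) j.succ, by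
          rw [Multiset.card_add, Multiset.card_replicate, aux_card_finset_sum_multiset]
          simp only [Multiset.card_replicate]
          exact Nat.sub_add_cancel h⟩
      else ⟨Multiset.replicate L 0, by simp⟩ with hgdef
    have hcount : ∀ a : Fin n → ℕ, ∑ j, a j ≤ L → ∀ j : Fin n,
        Multiset.count (j.succ : Fin (n + 1))
          ((g a : Sym (Fin (n + 1)) L) : Multiset (Fin (n + 1))) = a j := by
      intro a ha j
      simp only [hgdef]
      erw [dif_pos ha]
      simp only [Sym.coe_mk]
      rw [Multiset.count_add, Multiset.count_replicate, Multiset.count_sum']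
      rw [if_neg (Fin.succ_ne_zero j).symm]
      rw [Finset.sum_congr rfl (fun k _ => Multiset.count_replicate _ _ _)]
      simp [Fin.succ_inj]
    have hinjOn : Set.InjOn g ↑(J.image f) := by
      intro a ha b hb hab
      have ha' := himg a (by exact_mod_cast ha)
      have hb' := himg b (by exact_mod_cast hb)
      funext j
      rw [← hcount a ha' j, ← hcount b hb' j, hab]
    have hle := Finset.card_le_card_of_injOn g (fun _ _ => Finset.mem_univ _) hinjOn
    calc (J.image f).card ≤ (Finset.univ : Finset (Sym (Fin (n + 1)) L)).card := hle
      _ = Fintype.card (Sym (Fin (n + 1)) L) := rfl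
      _ = (Fintype.card (Fin (n + 1)) + L - 1).choose L := Sym.card_sym_eq_choose L
      _ = (n + L).choose L := by rw [Fintype.card_fin, Nat.add_right_comm n 1 L, Nat.add_sub_cancel]
  calc J.card ≤ 2 ^ L * (J.image f).card := Finset.card_le_mul_card_image J (2 ^ L) hfiber
    _ ≤ 2 ^ L * (n + L).choose L := Nat.mul_le_mul_left _ himgcard
    _ ≤ (s + 1) * (n + L).choose L * 2 ^ L := by
        have h1 : (n + L).choose L ≤ (s + 1) * (n + L).choose L :=
          Nat.le_mul_of_pos_left _ (Nat.succ_pos s)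
        calc 2 ^ L * (n + L).choose L = (n + L).choose L * 2 ^ L := Nat.mul_comm _ _
          _ ≤ (s + 1) * (n + L).choose L * 2 ^ L := Nat.mul_le_mul_right _ h1
end
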